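/- Let m ≥ 1 and n = m + 1. The curve y : (−π/(2n), π/(2n)) → ℝ^m all of whose components equal y_j(t) = 2·tan(n t) is a solution of the system (hcu) on the interval (−π/(2n), π/(2n)). -/

import Mathlib

open Real

lemma stmt7_cos_ne (N t : ℝ) (hN : 0 < N)
    (ht : t ∈ Set.Ioo (-(Real.pi / (2 * N))) (Real.pi / (2 * N))) :
    Real.cos (N * t) ≠ 0 := by
  apply ne_of_gt
  apply Real.cos_pos_of_mem_Ioo
  constructor
  · have := ht.1
    have h : -(Real.pi / 2) = N * (-(Real.pi / (2 * N))) := by field_simp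
    rw [h]
    exact (mul_lt_mul_iff_right₀ hN).2 this
  · have := ht.2
    have h : Real.pi / 2 = N * (Real.pi / (2 * N)) := by field_simp
    rw [h]
    exact (mul_lt_mul_iff_right₀ hN).2 this

lemma stmt7_d1 (N t : ℝ) (hc : Real.cos (N * t) ≠ 0) :
    HasDerivAt (fun s => 2 * Real.tan (N * s)) (2 * N / Real.cos (N * t) ^ 2) t := by
  have h1 : HasDerivAt (fun s : ℝ => N * s) N t := by
    simpa using (hasDerivAt_id t).const_mul N
  have h2 := ((Real.hasDerivAt_tan hc).comp t h1).const_mul 2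
  refine h2.congr_deriv ?_
  ring

lemma stmt7_d2 (N t : ℝ) (hc : Real.cos (N * t) ≠ 0) :
    HasDerivAt (fun s => 2 * N / Real.cos (N * s) ^ 2)
      (4 * N ^ 2 * Real.sin (N * t) / Real.cos (N * t) ^ 3) t := by
  have h1 : HasDerivAt (fun s : ℝ => N * s) N t := by
    simpa using (hasDerivAt_id t).const_mul N
  have hcos : HasDerivAt (fun s => Real.cos (N * s)) (-Real.sin (N * t) * N) t := by
    exact (Real.hasDerivAt_cos (N * t)).comp t h1
  have hcos2 : HasDerivAt (fun s => Real.cos (N * s) ^ 2)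
      (2 * Real.cos (N * t) * (-Real.sin (N * t) * N)) t := by
    refine (hcos.pow 2).congr_deriv ?_
    rw [show (2:ℕ) - 1 = 1 from rfl]
    push_cast
    ring
  have hc2 : Real.cos (N * t) ^ 2 ≠ 0 := pow_ne_zero _ hc
  have h := (hasDerivAt_const t (2 * N)).div hcos2 hc2
  refine h.congr_deriv ?_
  field_simp
  ring

theorem stmt_7 (m n : ℕ) (hm : 1 ≤ m) (hn : n = m + 1)
    (y : ℝ → Fin m → ℝ)
    (hy : ∀ t : ℝ, ∀ j, y t j = 2 * Real.tan ((n : ℝ) * t)) :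
    (∀ j, ∀ t ∈ Set.Ioo (-(Real.pi / (2 * (n : ℝ)))) (Real.pi / (2 * (n : ℝ))),
      ContDiffAt ℝ 2 (fun s => y s j) t) ∧
    ∀ j, ∀ t ∈ Set.Ioo (-(Real.pi / (2 * (n : ℝ)))) (Real.pi / (2 * (n : ℝ))),
      deriv (deriv (fun s => y s j)) t
          - ((∑ k, y t k) + y t j) * deriv (fun s => y s j) t
        = y t j * (∑ k, (y t k) ^ 2) - (y t j) ^ 2 * (∑ k, y t k) := by
  set N : ℝ := (n : ℝ) with hNdef
  have hN : 0 < N := by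
    have h0 : 0 < n := by omega
    have : (0:ℝ) < (n:ℝ) := by exact_mod_cast h0
    simpa [hNdef] using this
  have hfun : ∀ j, (fun s => y s j) = fun s => 2 * Real.tan (N * s) :=
    fun j => funext fun s => hy s j
  constructor
  · intro j t ht
    rw [hfun j]
    have hc := stmt7_cos_ne N t hN ht
    have htan : ContDiffAt ℝ 2 Real.tan (N * t) := Real.contDiffAt_tan.2 hc
    have hlin : ContDiffAt ℝ 2 (fun s : ℝ => N * s) t :=
      (contDiff_const.mul contDiff_id).contDiffAt
    have := (htan.comp t hlin).const_smul (2:ℝ)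
    simpa [Function.comp, smul_eq_mul] using this
  · intro j t ht
    have hc := stmt7_cos_ne N t hN ht
    have hd1 : deriv (fun s => y s j) t = 2 * N / Real.cos (N * t) ^ 2 := by
      rw [hfun j]; exact (stmt7_d1 N t hc).deriv
    have hev : deriv (fun s => y s j) =ᶠ[nhds t]
        fun s => 2 * N / Real.cos (N * s) ^ 2 := by
      filter_upwards [Ioo_mem_nhds ht.1 ht.2] with s hs
      rw [hfun j]
      exact (stmt7_d1 N s (stmt7_cos_ne N s hN hs)).deriv
    have hd2 : deriv (deriv (fun s => y s j)) t
        = 4 * N ^ 2 * Real.sin (N * t) / Real.cos (N * t) ^ 3 := by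
      rw [hev.deriv_eq]
      exact (stmt7_d2 N t hc).deriv
    have hsum1 : (∑ k, y t k) = m * (2 * Real.tan (N * t)) := by
      simp [hy t, mul_comm]
    have hsum2 : (∑ k, (y t k) ^ 2) = m * (2 * Real.tan (N * t)) ^ 2 := by
      simp [hy t, mul_comm]
    rw [hd1, hd2, hsum1, hsum2, hy t j, Real.tan_eq_sin_div_cos]
    have hNm : N = (m : ℝ) + 1 := by rw [hNdef, hn]; push_cast; ring
    rw [hNm]
    field_simp
    ring
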